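/- Suppose Ψ: Sym(3) → ℝ is O(3)-invariant, i.e. Ψ(AᵀiA) = Ψ(i) for all A ∈ O(3) and all symmetric i. Then for every symmetric positive matrix i, the matrix i·(∂Ψ/∂i) is symmetric, where ∂Ψ/∂i denotes the gradient matrix of Ψ (so that DΨ(i)·h = Tr((∂Ψ/∂i) h) for symmetric h). -/

import Mathlib

open Matrix

/-- If `Ψ : Sym(3) → ℝ` is `O(3)`-invariant (`Ψ(Aᵀ i A) = Ψ(i)` for all
orthogonal `A`) and differentiable at symmetric points with symmetric gradient
matrix `∂Ψ/∂i` representing its derivative via the trace pairing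
(`DΨ(i)·h = Tr((∂Ψ/∂i) h)`, packaged here as a chain rule along arbitrary
differentiable matrix curves), then for every symmetric positive-definite `i`
the matrix `i · (∂Ψ/∂i)` is symmetric. -/
theorem stmt16 (Ψ : Matrix (Fin 3) (Fin 3) ℝ → ℝ)
    (gradΨ : Matrix (Fin 3) (Fin 3) ℝ → Matrix (Fin 3) (Fin 3) ℝ)
    (hgradsym : ∀ i : Matrix (Fin 3) (Fin 3) ℝ, iᵀ = i → (gradΨ i)ᵀ = gradΨ i)
    (hderiv : ∀ i : Matrix (Fin 3) (Fin 3) ℝ, iᵀ = i →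
        ∀ (γ : ℝ → Matrix (Fin 3) (Fin 3) ℝ) (γ' : Matrix (Fin 3) (Fin 3) ℝ),
          γ 0 = i →
          (∀ k l : Fin 3, HasDerivAt (fun t => γ t k l) (γ' k l) 0) →
          HasDerivAt (fun t => Ψ (γ t)) (gradΨ i * γ').trace 0)
    (hinv : ∀ A i : Matrix (Fin 3) (Fin 3) ℝ, Aᵀ * A = 1 → iᵀ = i →
        Ψ (Aᵀ * i * A) = Ψ i) :
    ∀ i : Matrix (Fin 3) (Fin 3) ℝ, i.PosDef → iᵀ = i →
      (i * gradΨ i)ᵀ = i * gradΨ i := by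
  intro i _hpd hisym
  letI : SeminormedRing (Matrix (Fin 3) (Fin 3) ℝ) := Matrix.linftyOpSemiNormedRing
  letI : NormedRing (Matrix (Fin 3) (Fin 3) ℝ) := Matrix.linftyOpNormedRing
  letI : NormedAlgebra ℝ (Matrix (Fin 3) (Fin 3) ℝ) := Matrix.linftyOpNormedAlgebra
  letI : CompleteSpace (Matrix (Fin 3) (Fin 3) ℝ) := FiniteDimensional.complete ℝ _
  set G := gradΨ i with hG
  have hGsym := hgradsym i hisym
  have key : ∀ W : Matrix (Fin 3) (Fin 3) ℝ, Wᵀ = -W →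
      (G * (Wᵀ * i + i * W)).trace = 0 := by
    intro W hW
    set f : ℝ → Matrix (Fin 3) (Fin 3) ℝ := fun t => NormedSpace.exp (t • W) with hf
    have hf0 : f 0 = 1 := by simp [hf]
    have horth : ∀ t, (f t)ᵀ * f t = 1 := by
      intro t
      have h1 : (f t)ᵀ = NormedSpace.exp (-(t • W)) := by
        rw [hf]
        simp only
        rw [← Matrix.exp_transpose, transpose_smul, hW, smul_neg]
      rw [h1, ← Matrix.exp_add_of_commute _ _ (Commute.neg_left (Commute.refl (t • W))),
        neg_add_cancel]
      simp
    have hfd : HasDerivAt f W 0 := by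
      have := hasDerivAt_exp_smul_const (𝕂 := ℝ) W 0
      simp only [zero_smul, NormedSpace.exp_zero, one_mul] at this
      exact this
    have hfe : ∀ k l : Fin 3, HasDerivAt (fun t => f t k l) (W k l) 0 := by
      intro k l
      exact ((Matrix.entryLinearMap ℝ ℝ k l).toContinuousLinearMap.hasFDerivAt).comp_hasDerivAt
        0 hfd
    set γ : ℝ → Matrix (Fin 3) (Fin 3) ℝ := fun t => (f t)ᵀ * i * f t with hγ
    have hγ0 : γ 0 = i := by simp [hγ, hf0]
    have hentry : ∀ k l : Fin 3,
        HasDerivAt (fun t => γ t k l) ((Wᵀ * i + i * W) k l) 0 := by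
      intro k l
      have heq : (fun t => γ t k l)
          = fun t => ∑ a : Fin 3, ∑ b : Fin 3, f t b k * i b a * f t a l := by
        funext t
        simp [hγ, Matrix.mul_apply, Finset.sum_mul, transpose_apply]
      rw [heq]
      have hsum : HasDerivAt
          (fun t => ∑ a : Fin 3, ∑ b : Fin 3, f t b k * i b a * f t a l)
          (∑ a : Fin 3, ∑ b : Fin 3,
            (W b k * i b a * f 0 a l + f 0 b k * i b a * W a l)) 0 := by
        apply HasDerivAt.fun_sum
        intro a _
        apply HasDerivAt.fun_sum
        intro b _
        exact ((hfe b k).mul_const (i b a)).mul (hfe a l)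
      convert hsum using 1
      rw [hf0]
      simp [Matrix.mul_apply, Matrix.one_apply, transpose_apply, mul_ite, ite_mul,
        Finset.sum_add_distrib, Finset.sum_ite_eq, Finset.sum_ite_eq']
    have hconst : (fun t => Ψ (γ t)) = fun _ => Ψ i := by
      funext t
      exact hinv (f t) i (horth t) hisym
    have h1 : HasDerivAt (fun t => Ψ (γ t)) ((G * (Wᵀ * i + i * W)).trace) 0 :=
      hderiv i hisym γ (Wᵀ * i + i * W) hγ0 hentry
    have h2 : HasDerivAt (fun t => Ψ (γ t)) 0 0 := by
      rw [hconst]; exact hasDerivAt_const 0 _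
    exact h1.unique h2
  set W : Matrix (Fin 3) (Fin 3) ℝ := i * G - G * i with hWdef
  have hWskew : Wᵀ = -W := by
    rw [hWdef, transpose_sub, transpose_mul, transpose_mul, hGsym, hisym, neg_sub]
  have htr : (Wᵀ * W).trace = 0 := by
    have h := key W hWskew
    have e : G * (Wᵀ * i + i * W) = G * Wᵀ * i + G * i * W := by noncomm_ring
    rw [e, trace_add] at h
    have e2 : (G * Wᵀ * i).trace = (i * G * Wᵀ).trace := by
      rw [trace_mul_comm, ← mul_assoc]
    have e3 : Wᵀ * W = i * G * Wᵀ + G * i * W := by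
      rw [hWskew, hWdef]; noncomm_ring
    rw [e3, trace_add, ← e2]
    exact h
  have hW0 : W = 0 := by
    have hexp : (Wᵀ * W).trace = ∑ j : Fin 3, ∑ k : Fin 3, W k j * W k j := by
      simp [Matrix.trace, Matrix.diag, Matrix.mul_apply, transpose_apply]
    rw [hexp] at htr
    ext k j
    have hnn : ∀ j ∈ Finset.univ, (0:ℝ) ≤ ∑ k : Fin 3, W k j * W k j := by
      intro j _
      exact Finset.sum_nonneg fun k _ => mul_self_nonneg _
    have := (Finset.sum_eq_zero_iff_of_nonneg hnn).mp htr j (Finset.mem_univ j)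
    have hnn2 : ∀ k ∈ Finset.univ, (0:ℝ) ≤ W k j * W k j :=
      fun k _ => mul_self_nonneg _
    have := (Finset.sum_eq_zero_iff_of_nonneg hnn2).mp this k (Finset.mem_univ k)
    simpa [mul_self_eq_zero] using this
  have hcomm : i * G = G * i := by
    have h0 : i * G - G * i = 0 := by rw [← hWdef]; exact hW0
    exact sub_eq_zero.mp h0
  rw [transpose_mul, hGsym, hisym, hcomm]
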